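/- Let w be the facility location profile output by the ((3 − √5)/2, 1)-Quantile mechanism on an instance. Then for every facility location profile o of that instance, MoA(w) ≤ (2 + √5) · MoA(o). In particular, the distortion of the ((3 − √5)/2, 1)-Quantile mechanism under the Max-of-Average cost is at most 2 + √5. -/

import Mathlib

noncomputable section

/-- Max-variant individual cost of an agent at `x` under facility profile `w`. -/
def fcost (x : ℝ) (w : ℝ × ℝ) : ℝ := max |x - w.1| |x - w.2|

/-- `w` is a facility location profile for the candidate multiset `A`:
its first slot is an element of `A` and its second slot is an element of `A`
with one copy of the first slot removed. -/
def IsProfile (A : Multiset ℝ) (w : ℝ × ℝ) : Prop :=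
  w.1 ∈ A ∧ w.2 ∈ A.erase w.1

/-- Canonical closest element of the multiset `A` to `p` (ties broken to the smaller). -/
def closest (A : Multiset ℝ) (p : ℝ) : ℝ :=
  if h : A.toFinset.Nonempty then
    (A.toFinset.filter fun a => ∀ b ∈ A.toFinset, |p - a| ≤ |p - b|).min'
      (by
        obtain ⟨a, ha, hmin⟩ := A.toFinset.exists_min_image (fun a => |p - a|) h
        exact ⟨a, Finset.mem_filter.mpr ⟨ha, hmin⟩⟩)
  else 0

/-- The `⌈γ · |S|⌉`-th leftmost element of the multiset `S` (the leftmost when `γ = 0`). -/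
def qSel (S : Multiset ℝ) (γ : ℝ) : ℝ :=
  (S.sort (· ≤ ·)).getD (⌈γ * (Multiset.card S : ℝ)⌉.toNat - 1) 0

/-- Multiset of locations of the agents of group `d`. -/
def groupLocs {n k : ℕ} (group : Fin n → Fin k) (x : Fin n → ℝ) (d : Fin k) : Multiset ℝ :=
  ((Finset.univ.filter fun i => group i = d).val).map x

/-- The (α,β)-Quantile mechanism: for each group `d` the representatives are the two
candidate locations closest to the ⌈α·n_d⌉-th leftmost agent of the group, and the two
facilities are chosen among the representatives by the ⌈β·k⌉-th leftmost rule. -/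
def quantileMech (A : Multiset ℝ) (α β : ℝ) {n k : ℕ}
    (group : Fin n → Fin k) (x : Fin n → ℝ) : ℝ × ℝ :=
  let y1 : Fin k → ℝ := fun d => closest A (qSel (groupLocs group x d) α)
  let y2 : Fin k → ℝ := fun d => closest (A.erase (y1 d)) (qSel (groupLocs group x d) α)
  let w1 : ℝ := qSel (Finset.univ.val.map y1) β
  let w2 : ℝ := qSel (Finset.univ.val.map fun d => if y1 d = w1 then y2 d else y1 d) β
  (w1, w2)

/-- Max-of-Average cost. -/
def MoA {n k : ℕ} (group : Fin n → Fin k) (x : Fin n → ℝ) (w : ℝ × ℝ) : ℝ :=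
  ⨆ d : Fin k,
    (1 / (((Finset.univ.filter fun i => group i = d).card : ℝ))) *
      ∑ i ∈ Finset.univ.filter (fun i => group i = d), fcost (x i) w

-- sorted count lemmas
lemma sorted_countP_le (l : List ℝ) (hl : l.Pairwise (· ≤ ·)) (j : ℕ) (hj : j < l.length) :
    j + 1 ≤ l.countP (fun b => decide (b ≤ l[j])) := by
  have hsplit := l.take_append_drop j
  have hdrop : l.drop j = l[j] :: l.drop (j+1) := List.drop_eq_getElem_cons hj
  have h1 : (l.take j).countP (fun b => decide (b ≤ l[j])) = (l.take j).length := by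
    rw [List.countP_eq_length]
    intro a ha
    simpa using (List.pairwise_append.mp (by rw [List.take_append_drop]; exact hl)).2.2 _ ha _ (hdrop ▸ List.mem_cons_self)
  have h2 : 1 ≤ (l.drop j).countP (fun b => decide (b ≤ l[j])) := by
    rw [hdrop, List.countP_cons]
    simp
  calc j + 1 ≤ (l.take j).length + (l.drop j).countP (fun b => decide (b ≤ l[j])) := by
        have : (l.take j).length = j := by simp [List.length_take, Nat.min_eq_left hj.le]
        omega
    _ = (l.take j).countP (fun b => decide (b ≤ l[j])) +
        (l.drop j).countP (fun b => decide (b ≤ l[j])) := by rw [h1]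
    _ = l.countP (fun b => decide (b ≤ l[j])) := by rw [← List.countP_append, hsplit]

lemma sorted_countP_ge (l : List ℝ) (hl : l.Pairwise (· ≤ ·)) (j : ℕ) (hj : j < l.length) :
    l.length - j ≤ l.countP (fun b => decide (l[j] ≤ b)) := by
  have hsplit := l.take_append_drop j
  have hdrop : l.drop j = l[j] :: l.drop (j+1) := List.drop_eq_getElem_cons hj
  have hsd : (l.drop j).Pairwise (· ≤ ·) := hl.sublist (List.drop_sublist _ _)
  have h2 : (l.drop j).countP (fun b => decide (l[j] ≤ b)) = (l.drop j).length := by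
    rw [List.countP_eq_length]
    intro a ha
    rw [hdrop] at ha hsd
    rcases List.mem_cons.mp ha with rfl | ha
    · simp
    · simpa using (List.pairwise_cons.mp hsd).1 a ha
  calc l.length - j = (l.drop j).length := by simp
    _ = (l.drop j).countP (fun b => decide (l[j] ≤ b)) := h2.symm
    _ ≤ (l.take j).countP (fun b => decide (l[j] ≤ b)) +
        (l.drop j).countP (fun b => decide (l[j] ≤ b)) := Nat.le_add_left _ _
    _ = l.countP (fun b => decide (l[j] ≤ b)) := by rw [← List.countP_append, hsplit]
lemma natcast_pred_real {t : ℕ} (ht : 1 ≤ t) : ((t - 1 : ℕ) : ℝ) + 1 = (t : ℝ) := by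
  push_cast [Nat.cast_sub ht]; ring

lemma qSel_spec (S : Multiset ℝ) {γ : ℝ} (hS : S ≠ 0) (h0 : 0 < γ) (h1 : γ ≤ 1) :
    ∃ (j : ℕ) (hj : j < (S.sort (· ≤ ·)).length),
      qSel S γ = (S.sort (· ≤ ·))[j] ∧
      ((j : ℝ) + 1 ≤ γ * (Multiset.card S : ℝ) + 1) ∧
      (γ * (Multiset.card S : ℝ) ≤ (j : ℝ) + 1) := by
  set l := S.sort (· ≤ ·) with hl
  have hlen : l.length = Multiset.card S := S.length_sort _
  have hcard : 0 < Multiset.card S := Multiset.card_pos.mpr hS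
  have hn0 : (0:ℝ) < (Multiset.card S : ℝ) := by exact_mod_cast hcard
  set c := ⌈γ * (Multiset.card S : ℝ)⌉ with hc
  have hc1 : 1 ≤ c := by
    have : (0:ℤ) < c := Int.ceil_pos.mpr (by positivity)
    omega
  have hcn : c ≤ (Multiset.card S : ℤ) := Int.ceil_le.mpr (by push_cast; nlinarith)
  have hct : (c.toNat : ℤ) = c := Int.toNat_of_nonneg (by omega)
  have htn : c.toNat ≤ Multiset.card S := by omega
  have ht1 : 1 ≤ c.toNat := by omega
  have hcr : ((c.toNat : ℕ) : ℝ) = (c : ℝ) := by exact_mod_cast hct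
  have h2 : ((c.toNat - 1 : ℕ) : ℝ) + 1 = (c : ℝ) := by rw [natcast_pred_real ht1, hcr]
  have hjl : c.toNat - 1 < l.length := by rw [hlen]; omega
  refine ⟨c.toNat - 1, hjl, ?_, ?_, ?_⟩
  · show qSel S γ = _
    unfold qSel
    rw [← hl, ← hc]
    exact List.getD_eq_getElem l 0 hjl
  · rw [h2]
    have := Int.ceil_lt_add_one (γ * (Multiset.card S : ℝ))
    rw [← hc] at this; linarith
  · rw [h2]; exact Int.le_ceil _
lemma qSel_mem (S : Multiset ℝ) {γ : ℝ} (hS : S ≠ 0) (h0 : 0 < γ) (h1 : γ ≤ 1) :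
    qSel S γ ∈ S := by
  obtain ⟨j, hj, hq, -, -⟩ := qSel_spec S hS h0 h1
  rw [hq, ← Multiset.mem_sort (· ≤ ·)]
  exact List.getElem_mem hj

lemma qSel_counts (S : Multiset ℝ) {γ : ℝ} (hS : S ≠ 0) (h0 : 0 < γ) (h1 : γ ≤ 1) :
    γ * (Multiset.card S : ℝ) ≤ (S.countP (fun b => b ≤ qSel S γ) : ℝ) ∧
    (1 - γ) * (Multiset.card S : ℝ) ≤ (S.countP (fun b => qSel S γ ≤ b) : ℝ) := by
  obtain ⟨j, hj, hq, hj2, hj1⟩ := qSel_spec S hS h0 h1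
  set l := S.sort (· ≤ ·) with hl
  have hsorted : l.Pairwise (· ≤ ·) := S.pairwise_sort _
  have hlen : l.length = Multiset.card S := S.length_sort _
  have hcl : ∀ (p : ℝ → Prop) [DecidablePred p],
      S.countP p = l.countP (fun b => decide (p b)) := by
    intro p hp
    conv_lhs => rw [← S.sort_eq (· ≤ ·)]
    rw [Multiset.coe_countP]
  constructor
  · have h := sorted_countP_le l hsorted j hj
    rw [hcl (fun b => b ≤ qSel S γ)]
    have : l.countP (fun b => decide (b ≤ qSel S γ)) = l.countP (fun b => decide (b ≤ l[j])) := by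
      rw [hq]
    rw [this]
    calc γ * (Multiset.card S : ℝ) ≤ (j : ℝ) + 1 := hj1
      _ ≤ _ := by exact_mod_cast h
  · have h := sorted_countP_ge l hsorted j hj
    rw [hcl (fun b => qSel S γ ≤ b)]
    have : l.countP (fun b => decide (qSel S γ ≤ b)) = l.countP (fun b => decide (l[j] ≤ b)) := by
      rw [hq]
    rw [this]
    have hjn : (j : ℝ) ≤ γ * (Multiset.card S : ℝ) := by linarith
    have hcast : ((l.length - j : ℕ) : ℝ) = (Multiset.card S : ℝ) - (j : ℝ) := by
      rw [Nat.cast_sub hj.le, hlen]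
    calc (1 - γ) * (Multiset.card S : ℝ) ≤ (Multiset.card S : ℝ) - (j : ℝ) := by nlinarith
      _ = ((l.length - j : ℕ) : ℝ) := hcast.symm
      _ ≤ _ := by exact_mod_cast h

lemma le_qSel_one (S : Multiset ℝ) {v : ℝ} (hv : v ∈ S) : v ≤ qSel S 1 := by
  have hS : S ≠ 0 := by rintro rfl; simp at hv
  obtain ⟨j, hj, hq, hj2, hj1⟩ := qSel_spec S hS one_pos le_rfl
  set l := S.sort (· ≤ ·) with hl
  have hsorted : l.Pairwise (· ≤ ·) := S.pairwise_sort _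
  have hlen : l.length = Multiset.card S := S.length_sort _
  rw [← Multiset.mem_sort (· ≤ ·), ← hl, List.mem_iff_getElem] at hv
  obtain ⟨i, hi, rfl⟩ := hv
  rw [hq]
  have hij : i ≤ j := by
    have h1 : (j : ℝ) + 1 ≥ 1 * (Multiset.card S : ℝ) := hj1
    have h2 : (Multiset.card S : ℝ) ≤ ((j + 1 : ℕ) : ℝ) := by push_cast; linarith
    have : Multiset.card S ≤ j + 1 := by exact_mod_cast h2
    omega
  exact hsorted.rel_get_of_le (a := ⟨i, hi⟩) (b := ⟨j, hj⟩) hij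
lemma closest_spec (A : Multiset ℝ) (hA : A ≠ 0) (p : ℝ) :
    closest A p ∈ A ∧ ∀ b ∈ A, |p - closest A p| ≤ |p - b| := by
  have h : A.toFinset.Nonempty := Multiset.toFinset_nonempty.mpr hA
  unfold closest
  rw [dif_pos h]
  have hmem := Finset.min'_mem (A.toFinset.filter fun a => ∀ b ∈ A.toFinset, |p - a| ≤ |p - b|)
    (by
      obtain ⟨a, ha, hmin⟩ := A.toFinset.exists_min_image (fun a => |p - a|) h
      exact ⟨a, Finset.mem_filter.mpr ⟨ha, hmin⟩⟩)
  rw [Finset.mem_filter] at hmem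
  exact ⟨Multiset.mem_toFinset.mp hmem.1,
    fun b hb => hmem.2 b (Multiset.mem_toFinset.mpr hb)⟩

lemma fcost_nonneg (x : ℝ) (w : ℝ × ℝ) : 0 ≤ fcost x w :=
  le_trans (abs_nonneg _) (le_max_left _ _)

lemma fcost_le_mid (x a b : ℝ) : fcost x (a, b) ≤ |x - (a+b)/2| + |a-b|/2 := by
  have h2 : |(a+b)/2 - a| = |a-b|/2 := by
    rw [show (a+b)/2 - a = -((a-b)/2) by ring, abs_neg, abs_div]
    simp
  have h3 : |(a+b)/2 - b| = |a-b|/2 := by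
    rw [show (a+b)/2 - b = (a-b)/2 by ring, abs_div]
    simp
  apply max_le
  · calc |x - a| ≤ |x - (a+b)/2| + |(a+b)/2 - a| := abs_sub_le _ _ _
      _ = _ := by rw [h2]
  · calc |x - b| ≤ |x - (a+b)/2| + |(a+b)/2 - b| := abs_sub_le _ _ _
      _ = _ := by rw [h3]

lemma mid_le_fcost (x a b : ℝ) : |x - (a+b)/2| + |a-b|/2 ≤ fcost x (a, b) := by
  unfold fcost
  rcases le_total x ((a+b)/2) with h | h <;> rcases le_total a b with hab | hab
  · rw [abs_of_nonpos (by linarith), abs_of_nonpos (by linarith)]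
    refine le_trans ?_ (le_max_right _ _)
    rw [show -(x - (a+b)/2) + -(a-b)/2 = -(x - b) by ring]
    exact neg_le_abs _
  · rw [abs_of_nonpos (by linarith), abs_of_nonneg (by linarith)]
    refine le_trans ?_ (le_max_left _ _)
    rw [show -(x - (a+b)/2) + (a-b)/2 = -(x - a) by ring]
    exact neg_le_abs _
  · rw [abs_of_nonneg (by linarith), abs_of_nonpos (by linarith)]
    refine le_trans ?_ (le_max_left _ _)
    rw [show x - (a+b)/2 + -(a-b)/2 = x - a by ring]
    exact le_abs_self _
  · rw [abs_of_nonneg (by linarith), abs_of_nonneg (by linarith)]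
    refine le_trans ?_ (le_max_right _ _)
    rw [show x - (a+b)/2 + (a-b)/2 = x - b by ring]
    exact le_abs_self _

lemma fcost_le_of_interval {x lo hi : ℝ} {w : ℝ × ℝ}
    (h1 : lo ≤ w.1) (h2 : w.1 ≤ hi) (h3 : lo ≤ w.2) (h4 : w.2 ≤ hi) :
    fcost x w ≤ max (x - lo) (hi - x) := by
  unfold fcost
  apply max_le <;> rw [abs_sub_le_iff] <;> constructor
  · exact le_trans (by linarith) (le_max_left _ _)
  · exact le_trans (by linarith) (le_max_right _ _)
  · exact le_trans (by linarith) (le_max_left _ _)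
  · exact le_trans (by linarith) (le_max_right _ _)

lemma reps_le_fcost (A : Multiset ℝ) (hA : 2 ≤ Multiset.card A) (p : ℝ) (o : ℝ × ℝ)
    (ho : IsProfile A o) :
    |p - closest A p| ≤ fcost p o ∧
    |p - closest (A.erase (closest A p)) p| ≤ fcost p o := by
  obtain ⟨ho1, ho2⟩ := ho
  have hA0 : A ≠ 0 := by
    intro h; rw [h] at hA; simp at hA
  obtain ⟨htmem, htle⟩ := closest_spec A hA0 p
  set t := closest A p
  have hAe : A.erase t ≠ 0 := by
    have := Multiset.card_erase_of_mem htmem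
    intro h
    rw [h] at this
    simp at this
    omega
  obtain ⟨hsmem, hsle⟩ := closest_spec (A.erase t) hAe p
  constructor
  · exact le_trans (htle o.1 ho1) (le_max_left _ _)
  · by_cases hot : o.1 = t
    · refine le_trans (hsle o.2 ?_) (le_max_right _ _)
      rwa [← hot]
    · refine le_trans (hsle o.1 ?_) (le_max_left _ _)
      exact (Multiset.mem_erase_of_ne hot).mpr ho1
set_option maxHeartbeats 2000000 in
/-- For the Max-of-Average cost, the distortion of the ((3-√5)/2,1)-Quantile mechanism
is at most 2 + √5. -/
theorem quantileMech_MoA_distortion_golden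
    (A : Multiset ℝ) (hA : 2 ≤ Multiset.card A)
    (n k : ℕ) (hn : 0 < n) (hk : 0 < k)
    (group : Fin n → Fin k) (hgrp : ∀ d : Fin k, ∃ i : Fin n, group i = d)
    (x : Fin n → ℝ) (o : ℝ × ℝ) (ho : IsProfile A o) :
    MoA group x (quantileMech A ((3 - Real.sqrt 5) / 2) 1 group x) ≤
      (2 + Real.sqrt 5) * MoA group x o := by
  have hs5 : Real.sqrt 5 * Real.sqrt 5 = 5 := Real.mul_self_sqrt (by norm_num)
  have hs5nn : 0 ≤ Real.sqrt 5 := Real.sqrt_nonneg 5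
  set s5 := Real.sqrt 5 with hs5def
  have hs5lb : 2 < s5 := by nlinarith
  have hs5ub : s5 < 3 := by nlinarith
  set α : ℝ := (3 - s5)/2 with hαdef
  have hα0 : 0 < α := by rw [hαdef]; linarith
  have hα1 : α < 1 := by rw [hαdef]; linarith
  have hkey1 : (1 - α) * (1 + s5) = 2 := by rw [hαdef]; linear_combination (1/2) * hs5
  have hkey2 : α * (3 + s5) = 2 := by rw [hαdef]; linear_combination (-(1/2)) * hs5
  -- groups
  set N : Fin k → Finset (Fin n) := fun d => Finset.univ.filter (fun i => group i = d) with hN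
  set nd : Fin k → ℕ := fun d => (N d).card with hnddef
  have hnd : ∀ d, 0 < nd d := by
    intro d
    obtain ⟨i, hi⟩ := hgrp d
    exact Finset.card_pos.mpr ⟨i, by simp [hN, hi]⟩
  have hndR : ∀ d, (0:ℝ) < (nd d : ℝ) := fun d => by exact_mod_cast hnd d
  -- group locations
  have hLcard : ∀ d, Multiset.card (groupLocs group x d) = nd d := by
    intro d
    rw [groupLocs, Multiset.card_map]
    rfl
  have hL0 : ∀ d, groupLocs group x d ≠ 0 := by
    intro d
    rw [← Multiset.card_pos, hLcard d]
    exact hnd d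
  set a : Fin k → ℝ := fun d => qSel (groupLocs group x d) α with hadef
  -- counting facts
  have cnt1 : ∀ d, α * (nd d : ℝ) ≤ (((N d).filter (fun i => x i ≤ a d)).card : ℝ) := by
    intro d
    have h := (qSel_counts (groupLocs group x d) (hL0 d) hα0 hα1.le).1
    rw [hLcard d] at h
    have hcc : ((N d).filter (fun i => x i ≤ a d)).card
        = Multiset.countP (fun b => b ≤ a d) (groupLocs group x d) := by
      rw [groupLocs, Multiset.countP_map]
      rfl
    rw [hcc]
    exact h
  have cnt2 : ∀ d, (1 - α) * (nd d : ℝ) ≤ (((N d).filter (fun i => a d ≤ x i)).card : ℝ) := by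
    intro d
    have h := (qSel_counts (groupLocs group x d) (hL0 d) hα0 hα1.le).2
    rw [hLcard d] at h
    have hcc : ((N d).filter (fun i => a d ≤ x i)).card
        = Multiset.countP (fun b => a d ≤ b) (groupLocs group x d) := by
      rw [groupLocs, Multiset.countP_map]
      rfl
    rw [hcc]
    exact h
  -- optimum decomposition
  set m : ℝ := (o.1 + o.2)/2 with hmdef
  set r : ℝ := |o.1 - o.2|/2 with hrdef
  have hr0 : 0 ≤ r := by rw [hrdef]; positivity
  set OPT : ℝ := MoA group x o with hOPTdef
  have hfo_lo : ∀ p : ℝ, |p - m| + r ≤ fcost p o := by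
    intro p
    have := mid_le_fcost p o.1 o.2
    rwa [hmdef, hrdef]
  have hfo_hi : ∀ p : ℝ, fcost p o ≤ |p - m| + r := by
    intro p
    have := fcost_le_mid p o.1 o.2
    rwa [hmdef, hrdef]
  haveI hkne : Nonempty (Fin k) := ⟨⟨0, hk⟩⟩
  have hsum_o : ∀ d, ∑ i ∈ N d, fcost (x i) o ≤ (nd d : ℝ) * OPT := by
    intro d
    have hb : BddAbove (Set.range fun d : Fin k =>
        (1 / ((nd d : ℝ))) * ∑ i ∈ N d, fcost (x i) o) :=
      Set.Finite.bddAbove (Set.finite_range _)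
    have hle : (1 / ((nd d : ℝ))) * ∑ i ∈ N d, fcost (x i) o ≤ OPT := by
      rw [hOPTdef]
      exact le_ciSup hb d
    have := mul_le_mul_of_nonneg_left hle (le_of_lt (hndR d))
    calc ∑ i ∈ N d, fcost (x i) o
        = (nd d : ℝ) * ((1 / ((nd d : ℝ))) * ∑ i ∈ N d, fcost (x i) o) := by
          rw [one_div, ← mul_assoc, mul_inv_cancel₀ (ne_of_gt (hndR d)), one_mul]
      _ ≤ (nd d : ℝ) * OPT := this
  have hsum_abs : ∀ d, ∑ i ∈ N d, |x i - m| ≤ (nd d : ℝ) * (OPT - r) := by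
    intro d
    have h1 : ∑ i ∈ N d, (|x i - m| + r) ≤ ∑ i ∈ N d, fcost (x i) o :=
      Finset.sum_le_sum fun i _ => hfo_lo (x i)
    rw [Finset.sum_add_distrib, Finset.sum_const, nsmul_eq_mul] at h1
    have := hsum_o d
    have hcard : ((N d).card : ℝ) = (nd d : ℝ) := by rw [hnddef]
    rw [hcard] at h1
    linarith
  have hrOPT : r ≤ OPT := by
    obtain ⟨d⟩ := hkne
    have h1 : (nd d : ℝ) * r ≤ ∑ i ∈ N d, fcost (x i) o := by
      calc (nd d : ℝ) * r = ∑ _i ∈ N d, r := by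
            rw [Finset.sum_const, nsmul_eq_mul]
        _ ≤ ∑ i ∈ N d, fcost (x i) o := by
            refine Finset.sum_le_sum fun i _ => ?_
            have := hfo_lo (x i)
            have habs : 0 ≤ |x i - m| := abs_nonneg _
            linarith
    have h2 := hsum_o d
    nlinarith [hndR d]
  have hR : 0 ≤ OPT - r := by linarith
  -- representatives
  set y1 : Fin k → ℝ := fun d => closest A (qSel (groupLocs group x d) α) with hy1def
  set y2 : Fin k → ℝ := fun d => closest (A.erase (y1 d)) (qSel (groupLocs group x d) α) with hy2def
  set w1 : ℝ := qSel (Finset.univ.val.map y1) 1 with hw1def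
  set z : Fin k → ℝ := fun d => if y1 d = w1 then y2 d else y1 d with hzdef
  set w2 : ℝ := qSel (Finset.univ.val.map z) 1 with hw2def
  have hmech : quantileMech A α 1 group x = (w1, w2) := rfl
  have hy1b : ∀ d, |a d - y1 d| ≤ |a d - m| + r := by
    intro d
    exact le_trans (reps_le_fcost A hA (a d) o ho).1 (hfo_hi (a d))
  have hy2b : ∀ d, |a d - y2 d| ≤ |a d - m| + r := by
    intro d
    exact le_trans (reps_le_fcost A hA (a d) o ho).2 (hfo_hi (a d))
  -- w1 w2 as maxima
  have hT1 : (Finset.univ.val.map y1 : Multiset ℝ) ≠ 0 := by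
    rw [← Multiset.card_pos, Multiset.card_map]
    simpa using hk
  have hT2 : (Finset.univ.val.map z : Multiset ℝ) ≠ 0 := by
    rw [← Multiset.card_pos, Multiset.card_map]
    simpa using hk
  have hw1mem : ∃ d, y1 d = w1 := by
    have := qSel_mem _ hT1 one_pos le_rfl
    rw [← hw1def] at this
    obtain ⟨d, -, hd⟩ := Multiset.mem_map.mp this
    exact ⟨d, hd⟩
  have hw2mem : ∃ d, z d = w2 := by
    have := qSel_mem _ hT2 one_pos le_rfl
    rw [← hw2def] at this
    obtain ⟨d, -, hd⟩ := Multiset.mem_map.mp this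
    exact ⟨d, hd⟩
  have hle_w1 : ∀ d, y1 d ≤ w1 := by
    intro d
    exact le_qSel_one _ (Multiset.mem_map_of_mem y1 (Finset.mem_univ d))
  have hle_w2 : ∀ d, z d ≤ w2 := by
    intro d
    exact le_qSel_one _ (Multiset.mem_map_of_mem z (Finset.mem_univ d))
  -- deviation bound
  have D1 : ∀ d, (1 - α) * (a d - m) ≤ OPT - r := by
    intro d
    rcases le_total (a d) m with h | h
    · have h0 : (1 - α) * (a d - m) ≤ 0 :=
        mul_nonpos_of_nonneg_of_nonpos (by linarith) (by linarith)
      linarith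
    · have h1 : (((N d).filter (fun i => a d ≤ x i)).card : ℝ) * (a d - m)
          ≤ ∑ i ∈ (N d).filter (fun i => a d ≤ x i), |x i - m| := by
        calc (((N d).filter (fun i => a d ≤ x i)).card : ℝ) * (a d - m)
            = ∑ _i ∈ (N d).filter (fun i => a d ≤ x i), (a d - m) := by
              rw [Finset.sum_const, nsmul_eq_mul]
          _ ≤ _ := by
              refine Finset.sum_le_sum fun i hi => ?_
              have hx : a d ≤ x i := (Finset.mem_filter.mp hi).2
              have h2 : x i - m ≤ |x i - m| := le_abs_self _
              linarith
      have h2 : ∑ i ∈ (N d).filter (fun i => a d ≤ x i), |x i - m|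
          ≤ ∑ i ∈ N d, |x i - m| :=
        Finset.sum_le_sum_of_subset_of_nonneg (Finset.filter_subset _ _)
          (fun i _ _ => abs_nonneg _)
      have h3 := hsum_abs d
      have h4 := cnt2 d
      have h5 : (1 - α) * (nd d : ℝ) * (a d - m)
          ≤ (((N d).filter (fun i => a d ≤ x i)).card : ℝ) * (a d - m) :=
        mul_le_mul_of_nonneg_right h4 (by linarith)
      nlinarith [hndR d]
  -- upper bounds for representatives
  have hub : ∀ d v, |a d - v| ≤ |a d - m| + r → v ≤ m + (1 + s5) * (OPT - r) + r := by
    intro d v hv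
    have h1 : v - a d ≤ |a d - v| := by rw [abs_sub_comm]; exact le_abs_self _
    have hKnn : 0 ≤ (1 + s5) * (OPT - r) := mul_nonneg (by linarith) hR
    rcases le_total (a d) m with h | h
    · rw [abs_of_nonpos (show a d - m ≤ 0 by linarith)] at hv
      linarith
    · rw [abs_of_nonneg (show 0 ≤ a d - m by linarith)] at hv
      have hD := D1 d
      have h2 : 2 * (a d - m) ≤ (1 + s5) * (OPT - r) := by
        have h3 : (1 + s5) * ((1 - α) * (a d - m)) ≤ (1 + s5) * (OPT - r) :=
          mul_le_mul_of_nonneg_left hD (by linarith)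
        have h4 : 2 * (a d - m) = (1 + s5) * ((1 - α) * (a d - m)) := by
          linear_combination (m - a d) * hkey1
        linarith
      linarith
  have hw1ub : w1 ≤ m + (1 + s5) * (OPT - r) + r := by
    obtain ⟨d, hd⟩ := hw1mem
    rw [← hd]
    exact hub d _ (hy1b d)
  have hw2ub : w2 ≤ m + (1 + s5) * (OPT - r) + r := by
    obtain ⟨d, hd⟩ := hw2mem
    rw [← hd]
    by_cases hy : y1 d = w1
    · rw [show z d = y2 d from if_pos hy]
      exact hub d _ (hy2b d)
    · rw [show z d = y1 d from if_neg hy]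
      exact hub d _ (hy1b d)
  have hndnn : ∀ e : Fin k, (0:ℝ) ≤ (nd e : ℝ) := fun e => (hndR e).le
  -- per-group bound
  have key : ∀ e, ∑ i ∈ N e, fcost (x i) (w1, w2) ≤ (nd e : ℝ) * ((2 + s5) * OPT) := by
    intro e
    have hprod1 : (0:ℝ) ≤ (nd e : ℝ) * r := mul_nonneg (hndnn e) hr0
    have hprod2 : (0:ℝ) ≤ s5 * ((nd e : ℝ) * r) := mul_nonneg hs5nn hprod1
    by_cases hcase : ∃ d, y1 d = w1 ∧ m ≤ a d
    · obtain ⟨d0, hd0, hmd0⟩ := hcase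
      have hav : |a d0 - y1 d0| ≤ |a d0 - m| + r := hy1b d0
      have habs : |a d0 - m| = a d0 - m := abs_of_nonneg (by linarith)
      have hlo1 : m - r ≤ w1 := by
        have h1 : a d0 - y1 d0 ≤ |a d0 - y1 d0| := le_abs_self _
        rw [habs] at hav
        rw [← hd0]
        linarith
      have hlo2 : m - r ≤ w2 := by
        have hzd0 : z d0 = y2 d0 := if_pos hd0
        have hav2 := hy2b d0
        rw [habs] at hav2
        have h1 : a d0 - y2 d0 ≤ |a d0 - y2 d0| := le_abs_self _
        have h2 := hle_w2 d0
        rw [hzd0] at h2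
        linarith
      have hptb : ∀ i : Fin n, fcost (x i) (w1, w2)
          ≤ |x i - m| + ((1 + s5) * (OPT - r) + r) := by
        intro i
        have hKnn : 0 ≤ (1 + s5) * (OPT - r) := mul_nonneg (by linarith) hR
        refine le_trans (fcost_le_of_interval (x := x i) (w := (w1, w2)) hlo1 hw1ub hlo2 hw2ub) ?_
        apply max_le
        · linarith [le_abs_self (x i - m)]
        · linarith [neg_le_abs (x i - m)]
      calc ∑ i ∈ N e, fcost (x i) (w1, w2)
          ≤ ∑ i ∈ N e, (|x i - m| + ((1 + s5) * (OPT - r) + r)) :=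
            Finset.sum_le_sum fun i _ => hptb i
        _ = (∑ i ∈ N e, |x i - m|) + (nd e : ℝ) * ((1 + s5) * (OPT - r) + r) := by
            rw [Finset.sum_add_distrib, Finset.sum_const, nsmul_eq_mul]
        _ ≤ (nd e : ℝ) * (OPT - r) + (nd e : ℝ) * ((1 + s5) * (OPT - r) + r) := by
            linarith [hsum_abs e]
        _ ≤ (nd e : ℝ) * ((2 + s5) * OPT) := by nlinarith [hprod1, hprod2]
    · push_neg at hcase
      have hw1B : w1 ≤ m + r := by
        obtain ⟨d1, hd1⟩ := hw1mem
        have hlt : a d1 < m := hcase d1 hd1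
        have hav := hy1b d1
        rw [abs_of_nonpos (show a d1 - m ≤ 0 by linarith)] at hav
        have h1 : y1 d1 - a d1 ≤ |a d1 - y1 d1| := by
          rw [abs_sub_comm]; exact le_abs_self _
        rw [← hd1]
        linarith
      have hw2B : w2 ≤ m + r := by
        obtain ⟨d2, hd2⟩ := hw2mem
        by_cases hy : y1 d2 = w1
        · have hlt : a d2 < m := hcase d2 hy
          have hzd : z d2 = y2 d2 := if_pos hy
          have hav := hy2b d2
          rw [abs_of_nonpos (show a d2 - m ≤ 0 by linarith)] at hav
          have h1 : y2 d2 - a d2 ≤ |a d2 - y2 d2| := by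
            rw [abs_sub_comm]; exact le_abs_self _
          rw [← hd2, hzd]
          linarith
        · have hzd : z d2 = y1 d2 := if_neg hy
          rw [← hd2, hzd]
          exact le_trans (hle_w1 d2) hw1B
      set δ : ℝ := max (m - a e) 0 with hδdef
      have hδ0 : 0 ≤ δ := le_max_right _ _
      have hlby : ∀ v, |a e - v| ≤ |a e - m| + r → m - 2*δ - r ≤ v := by
        intro v hv
        have h1 : a e - v ≤ |a e - v| := le_abs_self _
        rcases le_total (a e) m with h | h
        · rw [abs_of_nonpos (show a e - m ≤ 0 by linarith)] at hv
          have hδeq : δ = m - a e := max_eq_left (by linarith)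
          linarith
        · rw [abs_of_nonneg (show 0 ≤ a e - m by linarith)] at hv
          linarith
      have hlw1 : m - 2*δ - r ≤ w1 := le_trans (hlby (y1 e) (hy1b e)) (hle_w1 e)
      have hlw2 : m - 2*δ - r ≤ w2 := by
        refine le_trans ?_ (hle_w2 e)
        by_cases hy : y1 e = w1
        · rw [show z e = y2 e from if_pos hy]
          exact hlby (y2 e) (hy2b e)
        · rw [show z e = y1 e from if_neg hy]
          exact hlby (y1 e) (hy1b e)
      have hball : ∀ i : Fin n, fcost (x i) (w1, w2) ≤ |x i - m| + (r + 2*δ) := by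
        intro i
        refine le_trans (fcost_le_of_interval (x := x i) (w := (w1, w2)) hlw1 hw1B hlw2 hw2B) ?_
        apply max_le
        · linarith [le_abs_self (x i - m)]
        · linarith [neg_le_abs (x i - m)]
      have hbin : ∀ i : Fin n, x i ≤ a e → fcost (x i) (w1, w2) ≤ |x i - m| + r := by
        intro i hxi
        refine le_trans (fcost_le_of_interval (x := x i) (w := (w1, w2)) hlw1 hw1B hlw2 hw2B) ?_
        rcases le_total (a e) m with h | h
        · have hδeq : δ = m - a e := max_eq_left (by linarith)
          rw [abs_of_nonpos (by linarith : x i - m ≤ 0)]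
          apply max_le <;> linarith
        · have hδeq : δ = 0 := max_eq_right (by linarith)
          apply max_le
          · linarith [le_abs_self (x i - m)]
          · linarith [neg_le_abs (x i - m)]
      have hδabs : ∀ i : Fin n, x i ≤ a e → δ ≤ |x i - m| := by
        intro i hxi
        rcases le_total (a e) m with h | h
        · have hδeq : δ = m - a e := max_eq_left (by linarith)
          rw [abs_of_nonpos (by linarith : x i - m ≤ 0)]
          linarith
        · have hδeq : δ = 0 := max_eq_right (by linarith)
          rw [hδeq]
          exact abs_nonneg _
      have hPQ : ((N e).filter (fun i => x i ≤ a e)).card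
          + ((N e).filter (fun i => ¬ x i ≤ a e)).card = nd e :=
        Finset.card_filter_add_card_filter_not _
      have hPsum : (((N e).filter (fun i => x i ≤ a e)).card : ℝ) * δ
          ≤ (nd e : ℝ) * (OPT - r) := by
        calc (((N e).filter (fun i => x i ≤ a e)).card : ℝ) * δ
            = ∑ _i ∈ (N e).filter (fun i => x i ≤ a e), δ := by
              rw [Finset.sum_const, nsmul_eq_mul]
          _ ≤ ∑ i ∈ (N e).filter (fun i => x i ≤ a e), |x i - m| :=
              Finset.sum_le_sum fun i hi => hδabs i (Finset.mem_filter.mp hi).2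
          _ ≤ ∑ i ∈ N e, |x i - m| :=
              Finset.sum_le_sum_of_subset_of_nonneg (Finset.filter_subset _ _)
                (fun i _ _ => abs_nonneg _)
          _ ≤ (nd e : ℝ) * (OPT - r) := hsum_abs e
      have hsplit : ∑ i ∈ N e, fcost (x i) (w1, w2)
          = ∑ i ∈ (N e).filter (fun i => x i ≤ a e), fcost (x i) (w1, w2)
            + ∑ i ∈ (N e).filter (fun i => ¬ x i ≤ a e), fcost (x i) (w1, w2) :=
        (Finset.sum_filter_add_sum_filter_not _ _ _).symm
      have habs_split : ∑ i ∈ (N e).filter (fun i => x i ≤ a e), |x i - m|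
          + ∑ i ∈ (N e).filter (fun i => ¬ x i ≤ a e), |x i - m|
          = ∑ i ∈ N e, |x i - m| :=
        Finset.sum_filter_add_sum_filter_not _ _ _
      have hPb : ∑ i ∈ (N e).filter (fun i => x i ≤ a e), fcost (x i) (w1, w2)
          ≤ ∑ i ∈ (N e).filter (fun i => x i ≤ a e), |x i - m|
            + (((N e).filter (fun i => x i ≤ a e)).card : ℝ) * r := by
        calc ∑ i ∈ (N e).filter (fun i => x i ≤ a e), fcost (x i) (w1, w2)
            ≤ ∑ i ∈ (N e).filter (fun i => x i ≤ a e), (|x i - m| + r) :=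
              Finset.sum_le_sum fun i hi => hbin i (Finset.mem_filter.mp hi).2
          _ = _ := by rw [Finset.sum_add_distrib, Finset.sum_const, nsmul_eq_mul]
      have hQb : ∑ i ∈ (N e).filter (fun i => ¬ x i ≤ a e), fcost (x i) (w1, w2)
          ≤ ∑ i ∈ (N e).filter (fun i => ¬ x i ≤ a e), |x i - m|
            + (((N e).filter (fun i => ¬ x i ≤ a e)).card : ℝ) * r
            + (((N e).filter (fun i => ¬ x i ≤ a e)).card : ℝ) * (2*δ) := by
        calc ∑ i ∈ (N e).filter (fun i => ¬ x i ≤ a e), fcost (x i) (w1, w2)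
            ≤ ∑ i ∈ (N e).filter (fun i => ¬ x i ≤ a e), (|x i - m| + (r + 2*δ)) :=
              Finset.sum_le_sum fun i _ => hball i
          _ = ∑ i ∈ (N e).filter (fun i => ¬ x i ≤ a e), |x i - m|
              + (((N e).filter (fun i => ¬ x i ≤ a e)).card : ℝ) * (r + 2*δ) := by
              rw [Finset.sum_add_distrib, Finset.sum_const, nsmul_eq_mul]
          _ = _ := by ring
      have hp := cnt1 e
      have hcardR : (((N e).filter (fun i => x i ≤ a e)).card : ℝ)
          + (((N e).filter (fun i => ¬ x i ≤ a e)).card : ℝ) = (nd e : ℝ) := by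
        exact_mod_cast congrArg (Nat.cast (R := ℝ)) hPQ
      -- bound on the Q δ term
      have e1 : (((N e).filter (fun i => ¬ x i ≤ a e)).card : ℝ) * (2*δ)
          ≤ (1 + s5) * ((nd e : ℝ) * (OPT - r)) := by
        have h1 : α * (nd e : ℝ) * δ
            ≤ (((N e).filter (fun i => x i ≤ a e)).card : ℝ) * δ :=
          mul_le_mul_of_nonneg_right hp hδ0
        have h2 : α * (nd e : ℝ) * δ ≤ (nd e : ℝ) * (OPT - r) := le_trans h1 hPsum
        have h3 : (((N e).filter (fun i => ¬ x i ≤ a e)).card : ℝ)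
            ≤ (1 - α) * (nd e : ℝ) := by linarith
        have h4 : (((N e).filter (fun i => ¬ x i ≤ a e)).card : ℝ) * (2*δ)
            ≤ (1 - α) * (nd e : ℝ) * (2*δ) :=
          mul_le_mul_of_nonneg_right h3 (by linarith)
        have h5 : (1 - α) * (nd e : ℝ) * (2*δ) = (1 + s5) * (α * (nd e : ℝ) * δ) := by
          linear_combination (-((nd e : ℝ) * δ)) * hkey2
        have h6 : (1 + s5) * (α * (nd e : ℝ) * δ) ≤ (1 + s5) * ((nd e : ℝ) * (OPT - r)) :=
          mul_le_mul_of_nonneg_left h2 (by linarith)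
        linarith
      have hrr : (((N e).filter (fun i => x i ≤ a e)).card : ℝ) * r
          + (((N e).filter (fun i => ¬ x i ≤ a e)).card : ℝ) * r = (nd e : ℝ) * r := by
        rw [← add_mul, hcardR]
      have hS := hsum_abs e
      nlinarith [hprod1, hprod2]
  -- conclusion
  rw [hmech]
  have hMoAw : MoA group x (w1, w2)
      = ⨆ d : Fin k, (1 / ((nd d : ℝ))) * ∑ i ∈ N d, fcost (x i) (w1, w2) := rfl
  rw [hMoAw]
  apply ciSup_le
  intro e
  calc (1 / ((nd e : ℝ))) * ∑ i ∈ N e, fcost (x i) (w1, w2)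
      ≤ (1 / ((nd e : ℝ))) * ((nd e : ℝ) * ((2 + s5) * OPT)) := by
        apply mul_le_mul_of_nonneg_left (key e)
        exact (one_div_pos.mpr (hndR e)).le
    _ = (2 + s5) * OPT := by
        rw [one_div, ← mul_assoc, inv_mul_cancel₀ (ne_of_gt (hndR e)), one_mul]
end
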